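/- For every natural number n, the torus board (4+2n)′×3′ does not admit a fault-free domino tiling. -/
import Mathlib


/-- Adjacency on the torus board `a′ × b′`: cells `(i,j)` and `(i+1,j)` with
addition in `ZMod a` (vertical neighbors, wrapping around) or `(i,j)` and
`(i,j+1)` with addition in `ZMod b` (horizontal neighbors, wrapping around). -/
def torAdj (a b : ℕ) (c d : ZMod a × ZMod b) : Prop :=
  (c.2 = d.2 ∧ (d.1 = c.1 + 1 ∨ c.1 = d.1 + 1)) ∨
  (c.1 = d.1 ∧ (d.2 = c.2 + 1 ∨ c.2 = d.2 + 1))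

/-- A tiling of the torus board: a set of dominoes (unordered pairs of adjacent
cells) such that every cell belongs to exactly one domino. -/
def torIsTiling (a b : ℕ) (T : Set (Sym2 (ZMod a × ZMod b))) : Prop :=
  (∀ p ∈ T, ∃ c d, torAdj a b c d ∧ p = s(c, d)) ∧
  (∀ x : ZMod a × ZMod b, ∃! p, p ∈ T ∧ x ∈ p)

/-- A tiling of the torus board is fault-free if every horizontal fault-line
(between rows `i` and `i+1`, for `i : ZMod a`) and every vertical fault-line
(between columns `j` and `j+1`, for `j : ZMod b`) is crossed by some domino. -/
def torFaultFree (a b : ℕ) (T : Set (Sym2 (ZMod a × ZMod b))) : Prop :=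
  (∀ i : ZMod a, ∃ j : ZMod b, s((i, j), (i + 1, j)) ∈ T) ∧
  (∀ j : ZMod b, ∃ i : ZMod a, s((i, j), (i, j + 1)) ∈ T)

/-- The torus board `a′ × b′` admits a fault-free domino tiling. -/
def torFaultFreeTileable (a b : ℕ) : Prop :=
  ∃ T : Set (Sym2 (ZMod a × ZMod b)), torIsTiling a b T ∧ torFaultFree a b T

/-- For every natural number `n`, the torus board `(4+2n)′ × 3′` does not admit
a fault-free domino tiling. -/
theorem tor_not_faultFree_42n'3' :
    ∀ n : ℕ, ¬ torFaultFreeTileable (4 + 2 * n) 3 := by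
  intro n
  set a := 4 + 2 * n with ha
  rintro ⟨T, ⟨hdom, huniq⟩, hhor, hver⟩
  haveI : NeZero a := ⟨by omega⟩
  have h1 : (1 : ZMod a) ≠ 0 := by
    intro h
    have h' : ((1 : ℕ) : ZMod a) = 0 := by exact_mod_cast h
    have := (ZMod.natCast_eq_zero_iff 1 a).mp h'
    have := Nat.le_of_dvd one_pos this
    omega
  have h2 : (2 : ZMod a) ≠ 0 := by
    intro h
    have h' : ((2 : ℕ) : ZMod a) = 0 := by exact_mod_cast h
    have := (ZMod.natCast_eq_zero_iff 2 a).mp h'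
    have := Nat.le_of_dvd two_pos this
    omega
  have uniq : ∀ (x : ZMod a × ZMod 3) (P Q : Sym2 (ZMod a × ZMod 3)),
      P ∈ T → Q ∈ T → x ∈ P → x ∈ Q → P = Q := by
    intro x P Q hP hQ hxP hxQ
    obtain ⟨R, -, hR⟩ := huniq x
    rw [hR P ⟨hP, hxP⟩, hR Q ⟨hQ, hxQ⟩]
  -- get a horizontal domino from the vertical fault-line at column 0
  obtain ⟨i, hD⟩ := hver 0
  simp only [zero_add] at hD
  -- hD : s((i,0),(i,1)) ∈ T
  -- the domino covering (i,2)
  obtain ⟨P, ⟨hPT, hPmem⟩, -⟩ := huniq ((i, 2) : ZMod a × ZMod 3)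
  obtain ⟨c, d, hadj, rfl⟩ := hdom P hPT
  rw [Sym2.mem_iff] at hPmem
  have key : ∃ p : ZMod a × ZMod 3, torAdj a 3 (i, 2) p ∧ s(((i : ZMod a), (2 : ZMod 3)), p) ∈ T := by
    rcases hPmem with h | h
    · exact ⟨d, h ▸ hadj, h ▸ hPT⟩
    · refine ⟨c, ?_, ?_⟩
      · subst h
        unfold torAdj at hadj ⊢; tauto
      · rw [Sym2.eq_swap] at hPT
        exact h ▸ hPT
  obtain ⟨⟨pi, pj⟩, hadj2, hP⟩ := key
  have hj3 : ∀ x : ZMod 3, x = 0 ∨ x = 1 ∨ x = 2 := by decide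
  rcases hadj2 with ⟨hcol, hrow⟩ | ⟨hrow, hcol⟩
  · -- vertical partner: pj = 2
    simp only at hcol hrow
    subst hcol
    -- hP : s((i,2),(pi,2)) ∈ T, hrow : pi = i + 1 ∨ i = pi + 1
    rcases hrow with rfl | hrow
    · -- partner below: fault line between rows i-1 and i is uncrossed
      obtain ⟨j', hQ⟩ := hhor (i - 1)
      have hii : i - 1 + 1 = i := by ring
      rw [hii] at hQ
      rcases hj3 j' with rfl | rfl | rfl
      · have hQD := uniq (i, 0) _ _ hQ hD (Sym2.mem_mk_right _ _) (Sym2.mem_mk_left _ _)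
        have hm : ((i - 1, (0:ZMod 3)) : ZMod a × ZMod 3) ∈ (s((i, (0:ZMod 3)), (i, 1)) : Sym2 _) := by
          rw [← hQD]; exact Sym2.mem_mk_left _ _
        rw [Sym2.mem_iff] at hm
        rcases hm with h | h
        · have h' : i - 1 = i := congrArg Prod.fst h
          exact h1 (by linear_combination -h')
        · have h' : (0 : ZMod 3) = 1 := congrArg Prod.snd h
          exact absurd h' (by decide)
      · have hQD := uniq (i, 1) _ _ hQ hD (Sym2.mem_mk_right _ _) (Sym2.mem_mk_right _ _)
        have hm : ((i - 1, (1:ZMod 3)) : ZMod a × ZMod 3) ∈ (s((i, (0:ZMod 3)), (i, 1)) : Sym2 _) := by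
          rw [← hQD]; exact Sym2.mem_mk_left _ _
        rw [Sym2.mem_iff] at hm
        rcases hm with h | h
        · have h' : (1 : ZMod 3) = 0 := congrArg Prod.snd h
          exact absurd h' (by decide)
        · have h' : i - 1 = i := congrArg Prod.fst h
          exact h1 (by linear_combination -h')
      · have hQP := uniq (i, 2) _ _ hQ hP (Sym2.mem_mk_right _ _) (Sym2.mem_mk_left _ _)
        have hm : ((i - 1, (2:ZMod 3)) : ZMod a × ZMod 3) ∈ (s((i, (2:ZMod 3)), (i + 1, 2)) : Sym2 _) := by
          rw [← hQP]; exact Sym2.mem_mk_left _ _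
        rw [Sym2.mem_iff] at hm
        rcases hm with h | h
        · have h' : i - 1 = i := congrArg Prod.fst h
          exact h1 (by linear_combination -h')
        · have h' : i - 1 = i + 1 := congrArg Prod.fst h
          exact h2 (by linear_combination -h')
    · -- partner above: fault line between rows i and i+1 is uncrossed
      obtain ⟨j', hQ⟩ := hhor i
      rcases hj3 j' with rfl | rfl | rfl
      · have hQD := uniq (i, 0) _ _ hQ hD (Sym2.mem_mk_left _ _) (Sym2.mem_mk_left _ _)
        have hm : ((i + 1, (0:ZMod 3)) : ZMod a × ZMod 3) ∈ (s((i, (0:ZMod 3)), (i, 1)) : Sym2 _) := by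
          rw [← hQD]; exact Sym2.mem_mk_right _ _
        rw [Sym2.mem_iff] at hm
        rcases hm with h | h
        · have h' : i + 1 = i := congrArg Prod.fst h
          exact h1 (by linear_combination h')
        · have h' : (0 : ZMod 3) = 1 := congrArg Prod.snd h
          exact absurd h' (by decide)
      · have hQD := uniq (i, 1) _ _ hQ hD (Sym2.mem_mk_left _ _) (Sym2.mem_mk_right _ _)
        have hm : ((i + 1, (1:ZMod 3)) : ZMod a × ZMod 3) ∈ (s((i, (0:ZMod 3)), (i, 1)) : Sym2 _) := by
          rw [← hQD]; exact Sym2.mem_mk_right _ _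
        rw [Sym2.mem_iff] at hm
        rcases hm with h | h
        · have h' : (1 : ZMod 3) = 0 := congrArg Prod.snd h
          exact absurd h' (by decide)
        · have h' : i + 1 = i := congrArg Prod.fst h
          exact h1 (by linear_combination h')
      · have hQP := uniq (i, 2) _ _ hQ hP (Sym2.mem_mk_left _ _) (Sym2.mem_mk_left _ _)
        have hm : ((i + 1, (2:ZMod 3)) : ZMod a × ZMod 3) ∈ (s((i, (2:ZMod 3)), (pi, 2)) : Sym2 _) := by
          rw [← hQP]; exact Sym2.mem_mk_right _ _
        rw [Sym2.mem_iff] at hm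
        rcases hm with h | h
        · have h' : i + 1 = i := congrArg Prod.fst h
          exact h1 (by linear_combination h')
        · have h' : i + 1 = pi := congrArg Prod.fst h
          exact h2 (by linear_combination h' - hrow)
  · -- horizontal partner: pi = i, pj ∈ {0, 1}
    simp only at hrow hcol
    subst hrow
    have hpj : pj = 0 ∨ pj = 1 := by
      rcases hcol with h | h
      · left; rw [h]; decide
      · rcases hj3 pj with h0 | h1 | h2
        · exact Or.inl h0
        · exact Or.inr h1
        · rw [h2] at h; exact absurd h (by decide)
    have hmemD : ((i, pj) : ZMod a × ZMod 3) ∈ (s((i, (0:ZMod 3)), (i, 1)) : Sym2 _) := by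
      rcases hpj with rfl | rfl
      · exact Sym2.mem_mk_left _ _
      · exact Sym2.mem_mk_right _ _
    have hPD := uniq (i, pj) _ _ hP hD (Sym2.mem_mk_right _ _) hmemD
    have : ((i, (2:ZMod 3)) : ZMod a × ZMod 3) ∈ (s((i, (0:ZMod 3)), (i, 1)) : Sym2 _) := by
      rw [← hPD]; exact Sym2.mem_mk_left _ _
    rw [Sym2.mem_iff] at this
    rcases this with h | h
    · have h' : (2 : ZMod 3) = 0 := congrArg Prod.snd h
      exact absurd h' (by decide)
    · have h' : (2 : ZMod 3) = 1 := congrArg Prod.snd h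
      exact absurd h' (by decide)
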